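/- Define I : ℝ → ℂ by I(α) = (1/√(2π)) · ∫_ℝ exp(−x²/2 + i·α·x³) dx. Then for every natural number m, the difference I(α) − Σ_{n=0}^{m} ((−1)^n / 8^n) · ((6n)! / ((2n)!·(3n)!)) · α^{2n} is O(α^{2m+2}) as α → 0; that is, I admits the asymptotic expansion Σ_{n ≥ 0} ((−1)^n/8^n)·((6n)!/((2n)!(3n)!))·α^{2n} at α = 0. -/

import Mathlib

open MeasureTheory Real Filter Asymptotics
open scoped Nat

/-- The cubic-model integral `I(α) = (1/√(2π)) ∫ exp(-x²/2 + iαx³) dx`. -/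
noncomputable def cubicI (α : ℝ) : ℂ :=
  (1 / Real.sqrt (2 * π) : ℝ) *
    ∫ x : ℝ, Complex.exp (-(x : ℂ) ^ 2 / 2 + Complex.I * α * (x : ℂ) ^ 3)

noncomputable def gmom (k : ℕ) : ℝ := ∫ x : ℝ, x ^ k * Real.exp (-x ^ 2 / 2)

lemma integrable_gmom (k : ℕ) :
    Integrable (fun x : ℝ => x ^ k * Real.exp (-x ^ 2 / 2)) := by
  have hcont : Continuous (fun x : ℝ => x ^ k * Real.exp (-x ^ 2 / 2)) := by fun_prop
  refine hcont.locallyIntegrable.integrable_of_isBigO_atTop_of_norm_isNegInvariant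
    (Eventually.of_forall fun x => ?_) (g := fun x : ℝ => Real.exp (-(1/2 : ℝ) * x)) ?_ ?_
  · simp [Function.comp, abs_mul, abs_pow, Real.abs_exp]
  · have h := rpow_mul_exp_neg_mul_sq_isLittleO_exp_neg (b := (1:ℝ)/2) (by norm_num) (k : ℝ)
    refine (h.congr' ?_ (EventuallyEq.refl _ _)).isBigO
    filter_upwards [eventually_gt_atTop (0:ℝ)] with x hx
    rw [Real.rpow_natCast]
    ring_nf
  · exact ⟨Set.Ioi 0, Ioi_mem_atTop 0, exp_neg_integrableOn_Ioi 0 (by norm_num)⟩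

lemma gmom_zero : gmom 0 = Real.sqrt (2 * π) := by
  have h := integral_gaussian (1/2 : ℝ)
  have : (fun x : ℝ => Real.exp (-(1/2:ℝ) * x ^ 2)) = fun x : ℝ => x ^ 0 * Real.exp (-x^2/2) := by
    funext x; ring_nf
  rw [this] at h
  rw [gmom, h]
  rw [show π / (1/2) = 2 * π from by ring]

lemma gmom_rec (k : ℕ) : gmom (k + 2) = (k + 1) * gmom k := by
  have hu : ∀ x : ℝ, HasDerivAt (fun x : ℝ => x ^ (k+1)) (((k:ℝ)+1) * x ^ k) x := by
    intro x
    simpa using hasDerivAt_pow (k+1) x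
  have hv : ∀ x : ℝ, HasDerivAt (fun x : ℝ => -Real.exp (-x^2/2)) (x * Real.exp (-x^2/2)) x := by
    intro x
    have h1 : HasDerivAt (fun x : ℝ => -x^2/2) (-x) x := by
      have := (hasDerivAt_pow 2 x).neg.div_const 2
      exact this.congr_deriv (by ring)
    have := (h1.exp).neg
    exact this.congr_deriv (by ring)
  have huv' : Integrable ((fun x:ℝ => x^(k+1)) * fun x => x * Real.exp (-x^2/2)) := by
    have h1 : ((fun x:ℝ => x^(k+1)) * fun x => x * Real.exp (-x^2/2))
        = fun x : ℝ => x ^ (k+2) * Real.exp (-x^2/2) := by funext x; simp only [Pi.mul_apply]; ring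
    rw [h1]; exact integrable_gmom (k+2)
  have hu'v : Integrable ((fun x:ℝ => ((k:ℝ)+1) * x ^ k) * fun x => -Real.exp (-x^2/2)) := by
    have h1 : ((fun x:ℝ => ((k:ℝ)+1) * x ^ k) * fun x => -Real.exp (-x^2/2))
        = fun x : ℝ => -(((k:ℝ)+1)) * (x ^ k * Real.exp (-x^2/2)) := by funext x; simp only [Pi.mul_apply]; ring
    rw [h1]; exact (integrable_gmom k).const_mul _
  have huv : Integrable ((fun x:ℝ => x^(k+1)) * fun x => -Real.exp (-x^2/2)) := by
    have h1 : ((fun x:ℝ => x^(k+1)) * fun x => -Real.exp (-x^2/2))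
        = fun x : ℝ => (-1 : ℝ) * (x ^ (k+1) * Real.exp (-x^2/2)) := by funext x; simp only [Pi.mul_apply]; ring
    rw [h1]; exact (integrable_gmom (k+1)).const_mul _
  have key := integral_mul_deriv_eq_deriv_mul_of_integrable (fun x _ => hu x) (fun x _ => hv x) huv' hu'v huv
  rw [gmom, gmom]
  rw [show (∫ x : ℝ, x ^ (k+2) * Real.exp (-x^2/2))
      = ∫ x : ℝ, x ^ (k+1) * (x * Real.exp (-x^2/2)) from by congr 1; funext x; ring]
  rw [key]
  rw [show (∫ x : ℝ, ((k:ℝ)+1) * x^k * -Real.exp (-x^2/2))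
      = ∫ x : ℝ, -(((k:ℝ)+1) * (x ^ k * Real.exp (-x^2/2))) from by congr 1; funext x; ring]
  rw [integral_neg, integral_const_mul]
  push_cast
  ring

lemma gmom_odd (n : ℕ) : gmom (2 * n + 1) = 0 := by
  have h := integral_neg_eq_self (fun x : ℝ => x ^ (2*n+1) * Real.exp (-x^2/2)) volume
  have h2 : (fun x : ℝ => (-x) ^ (2*n+1) * Real.exp (-(-x)^2/2))
      = fun x : ℝ => -(x ^ (2*n+1) * Real.exp (-x^2/2)) := by
    funext x
    have ho : Odd (2*n+1) := ⟨n, by ring⟩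
    rw [ho.neg_pow, neg_sq]
    ring
  rw [h2, integral_neg] at h
  have : gmom (2*n+1) = -gmom (2*n+1) := h.symm
  linarith

lemma gmom_even (n : ℕ) : gmom (2 * n) = (2 * n)! / (2 ^ n * n !) * Real.sqrt (2 * π) := by
  induction n with
  | zero => simpa using gmom_zero
  | succ n ih =>
    have h : 2 * (n + 1) = 2 * n + 2 := by ring
    rw [h, gmom_rec, ih]
    have h1 : ((2*n+2)! : ℝ) = (2*(n:ℝ)+2) * ((2*(n:ℝ)+1) * (2*n)!) := by
      rw [show 2*n+2 = (2*n+1) + 1 from by ring, Nat.factorial_succ, Nat.factorial_succ]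
      push_cast; ring
    rw [h1]
    have h2 : ((n+1)! : ℝ) = (n+1) * n ! := by rw [Nat.factorial_succ]; push_cast; ring
    rw [h2]
    have hne1 : ((2:ℝ) ^ n * n !) ≠ 0 := by positivity
    have hne2 : ((n:ℝ)+1) ≠ 0 := by positivity
    field_simp
    push_cast
    ring

noncomputable def taylorRem (N : ℕ) (t : ℝ) : ℂ :=
  Complex.exp (Complex.I * t) - ∑ k ∈ Finset.range N, (Complex.I * t) ^ k / k !

lemma continuous_taylorRem (N : ℕ) : Continuous (fun t : ℝ => taylorRem N t) := by
  unfold taylorRem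
  fun_prop

lemma taylorRem_zero (N : ℕ) : taylorRem (N + 1) 0 = 0 := by
  unfold taylorRem
  rw [Finset.sum_eq_single 0]
  · simp
  · intro k _ hk
    simp [zero_pow hk]
  · simp

lemma hasDerivAt_taylorRem (N : ℕ) (t : ℝ) :
    HasDerivAt (fun t : ℝ => taylorRem (N + 1) t) (Complex.I * taylorRem N t) t := by
  have h1 : ∀ z : ℂ, HasDerivAt (fun z : ℂ => Complex.I * z) Complex.I z := by
    intro z
    simpa using (hasDerivAt_id z).const_mul Complex.I
  have hexp : HasDerivAt (fun t : ℝ => Complex.exp (Complex.I * t))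
      (Complex.I * Complex.exp (Complex.I * t)) t := by
    have h2 : HasDerivAt (fun z : ℂ => Complex.exp (Complex.I * z))
        (Complex.exp (Complex.I * (t:ℂ)) * Complex.I) (t : ℂ) :=
      HasDerivAt.comp _ (Complex.hasDerivAt_exp _) (h1 _)
    simpa [mul_comm] using h2.comp_ofReal
  have hterm : ∀ k : ℕ, HasDerivAt (fun t : ℝ => (Complex.I * t) ^ k / k !)
      ((k : ℂ) * (Complex.I * t) ^ (k - 1) * Complex.I / k !) t := by
    intro k
    have h2 : HasDerivAt (fun z : ℂ => (Complex.I * z) ^ k)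
        ((k : ℂ) * (Complex.I * (t:ℂ)) ^ (k - 1) * Complex.I) (t : ℂ) :=
      HasDerivAt.comp _ (hasDerivAt_pow k _) (h1 _)
    exact (h2.comp_ofReal).div_const _
  have hsum : HasDerivAt (fun t : ℝ => ∑ k ∈ Finset.range (N+1), (Complex.I * t) ^ k / k !)
      (∑ k ∈ Finset.range (N+1), (k : ℂ) * (Complex.I * t) ^ (k - 1) * Complex.I / k !) t :=
    HasDerivAt.fun_sum fun k _ => hterm k
  have hds : (∑ k ∈ Finset.range (N+1), (k : ℂ) * (Complex.I * t) ^ (k - 1) * Complex.I / k !)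
      = Complex.I * ∑ k ∈ Finset.range N, (Complex.I * t) ^ k / k ! := by
    rw [Finset.sum_range_succ']
    simp only [Nat.cast_zero, zero_mul, Nat.factorial_zero, Nat.cast_one, div_one, zero_div,
      add_zero, Nat.add_sub_cancel]
    rw [Finset.mul_sum]
    refine Finset.sum_congr rfl fun k _ => ?_
    have hk : ((k:ℂ) + 1) ≠ 0 := Nat.cast_add_one_ne_zero k
    have hkf : ((k ! : ℂ)) ≠ 0 := by exact_mod_cast Nat.factorial_ne_zero k
    have hfs : (((k+1)! : ℂ)) = ((k:ℂ)+1) * k ! := by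
      rw [Nat.factorial_succ]; push_cast; ring
    rw [hfs]
    push_cast
    field_simp
  have := hexp.sub hsum
  rw [hds] at this
  refine HasDerivAt.congr_deriv this ?_
  unfold taylorRem
  ring

lemma taylorRem_neg (N : ℕ) (t : ℝ) : ‖taylorRem N (-t)‖ = ‖taylorRem N t‖ := by
  have : taylorRem N (-t) = (starRingEnd ℂ) (taylorRem N t) := by
    unfold taylorRem
    rw [map_sub, map_sum, ← Complex.exp_conj]
    congr 1
    · rw [map_mul, Complex.conj_I, Complex.conj_ofReal]
      push_cast
      ring_nf
    · refine Finset.sum_congr rfl fun k _ => ?_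
      rw [map_div₀, map_pow, map_mul, Complex.conj_I, Complex.conj_ofReal,
        map_natCast]
      push_cast
      ring_nf
  rw [this, RCLike.norm_conj]

lemma taylorRem_bound (N : ℕ) (t : ℝ) : ‖taylorRem N t‖ ≤ |t| ^ N / N ! := by
  induction N generalizing t with
  | zero =>
    simp [taylorRem, Complex.norm_exp]
  | succ N ih =>
    wlog ht : 0 ≤ t with H
    · have := H N ih (-t) (by linarith [lt_of_not_ge ht])
      rwa [taylorRem_neg, abs_neg] at this
    have hftc : taylorRem (N+1) t = ∫ s in (0:ℝ)..t, Complex.I * taylorRem N s := by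
      rw [intervalIntegral.integral_eq_sub_of_hasDerivAt
        (fun s _ => hasDerivAt_taylorRem N s)
        (((continuous_taylorRem N).const_smul Complex.I).intervalIntegrable 0 t)]
      rw [taylorRem_zero]
      ring
    rw [hftc]
    calc ‖∫ s in (0:ℝ)..t, Complex.I * taylorRem N s‖
        ≤ ∫ s in (0:ℝ)..t, ‖Complex.I * taylorRem N s‖ :=
          intervalIntegral.norm_integral_le_integral_norm ht
      _ ≤ ∫ s in (0:ℝ)..t, s ^ N / N ! := by
          apply intervalIntegral.integral_mono_on ht
          · exact ((continuous_taylorRem N).const_smul Complex.I).norm.intervalIntegrable 0 t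
          · exact (Continuous.intervalIntegrable (by fun_prop) 0 t)
          · intro s hs
            rw [norm_mul, Complex.norm_I, one_mul]
            refine (ih s).trans ?_
            rw [abs_of_nonneg hs.1]
      _ = |t| ^ (N+1) / (N+1)! := by
          rw [intervalIntegral.integral_div, integral_pow, abs_of_nonneg ht,
            Nat.factorial_succ]
          push_cast
          field_simp
          simp

lemma integrand_eq (M : ℕ) (α x : ℝ) :
    Complex.exp (-(x : ℂ) ^ 2 / 2 + Complex.I * α * (x : ℂ) ^ 3)
      = (∑ k ∈ Finset.range M,
          (Complex.I * α) ^ k / k ! * ((x ^ (3 * k) * Real.exp (-x ^ 2 / 2) : ℝ) : ℂ))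
        + ((Real.exp (-x ^ 2 / 2) : ℝ) : ℂ) * taylorRem M (α * x ^ 3) := by
  have h2 : (-(x : ℂ) ^ 2 / 2 + Complex.I * α * (x : ℂ) ^ 3)
      = ((-x ^ 2 / 2 : ℝ) : ℂ) + Complex.I * ((α * x ^ 3 : ℝ) : ℂ) := by push_cast; ring
  have h1 : Complex.exp (Complex.I * ((α * x ^ 3 : ℝ) : ℂ))
      = (∑ k ∈ Finset.range M, (Complex.I * ((α * x ^ 3 : ℝ) : ℂ)) ^ k / k !)
        + taylorRem M (α * x ^ 3) := by
    unfold taylorRem; ring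
  rw [h2, Complex.exp_add, ← Complex.ofReal_exp, h1, mul_add]
  congr 1
  rw [Finset.mul_sum]
  refine Finset.sum_congr rfl fun k _ => ?_
  rw [mul_pow, mul_pow]
  push_cast
  rw [pow_mul, ← mul_pow]
  ring

lemma integrable_term (α : ℝ) (k : ℕ) :
    Integrable (fun x : ℝ =>
      (Complex.I * α) ^ k / k ! * ((x ^ (3 * k) * Real.exp (-x ^ 2 / 2) : ℝ) : ℂ)) :=
  ((integrable_gmom (3 * k)).ofReal.const_mul _)

lemma rem_bound (M : ℕ) (α x : ℝ) :
    ‖((Real.exp (-x ^ 2 / 2) : ℝ) : ℂ) * taylorRem M (α * x ^ 3)‖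
      ≤ |α| ^ M / M ! * |x ^ (3 * M) * Real.exp (-x ^ 2 / 2)| := by
  rw [norm_mul, Complex.norm_real, Real.norm_of_nonneg (Real.exp_nonneg _)]
  calc Real.exp (-x ^ 2 / 2) * ‖taylorRem M (α * x ^ 3)‖
      ≤ Real.exp (-x ^ 2 / 2) * (|α * x ^ 3| ^ M / M !) := by
        gcongr
        exact taylorRem_bound M _
    _ = |α| ^ M / M ! * |x ^ (3 * M) * Real.exp (-x ^ 2 / 2)| := by
        rw [abs_mul (x ^ (3 * M)), abs_of_nonneg (Real.exp_nonneg _), abs_mul α,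
          mul_pow, abs_pow, ← pow_mul, abs_pow]
        ring

lemma integrable_rem (M : ℕ) (α : ℝ) :
    Integrable (fun x : ℝ =>
      ((Real.exp (-x ^ 2 / 2) : ℝ) : ℂ) * taylorRem M (α * x ^ 3)) := by
  have hg : Integrable (fun x : ℝ => |α| ^ M / M ! * |x ^ (3 * M) * Real.exp (-x ^ 2 / 2)|) :=
    ((integrable_gmom (3 * M)).abs.const_mul _)
  refine hg.mono' ?_ (Eventually.of_forall fun x => rem_bound M α x)
  apply Continuous.aestronglyMeasurable
  exact (Complex.continuous_ofReal.comp (by fun_prop)).mul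
    ((continuous_taylorRem M).comp (by fun_prop))

lemma sum_pair (f : ℕ → ℂ) (m : ℕ) (hodd : ∀ n, f (2 * n + 1) = 0) :
    ∑ k ∈ Finset.range (2 * m + 2), f k = ∑ n ∈ Finset.range (m + 1), f (2 * n) := by
  induction m with
  | zero =>
    rw [Finset.sum_range_succ, Finset.sum_range_one, Finset.sum_range_one]
    simpa using hodd 0
  | succ m ih =>
    have h : 2 * (m + 1) + 2 = (2 * m + 2) + 1 + 1 := by ring
    rw [h, Finset.sum_range_succ, Finset.sum_range_succ, ih,
      show 2 * m + 2 + 1 = 2 * (m + 1) + 1 from by ring, hodd (m + 1), add_zero,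
      show 2 * m + 2 = 2 * (m + 1) from by ring,
      Finset.sum_range_succ (fun n => f (2 * n)) (m + 1)]

lemma sqrt_two_pi_pos : 0 < Real.sqrt (2 * π) :=
  Real.sqrt_pos.2 (by positivity)

lemma cubicI_eq (m : ℕ) (α : ℝ) :
    cubicI α - ∑ n ∈ Finset.range (m + 1),
        ((-1 : ℂ) ^ n / 8 ^ n) * ((6 * n)! / ((2 * n)! * (3 * n)!)) * (α : ℂ) ^ (2 * n)
      = ((1 / Real.sqrt (2 * π) : ℝ) : ℂ) *
          ∫ x : ℝ, ((Real.exp (-x ^ 2 / 2) : ℝ) : ℂ) * taylorRem (2 * m + 2) (α * x ^ 3) := by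
  have hint : (∫ x : ℝ, Complex.exp (-(x : ℂ) ^ 2 / 2 + Complex.I * α * (x : ℂ) ^ 3))
      = (∑ k ∈ Finset.range (2 * m + 2), (Complex.I * α) ^ k / k ! * (gmom (3 * k) : ℂ))
        + ∫ x : ℝ, ((Real.exp (-x ^ 2 / 2) : ℝ) : ℂ) * taylorRem (2 * m + 2) (α * x ^ 3) := by
    rw [integral_congr_ae (Eventually.of_forall fun x => integrand_eq (2 * m + 2) α x)]
    rw [integral_add (integrable_finset_sum _ fun k _ => integrable_term α k)
      (integrable_rem (2 * m + 2) α)]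
    congr 1
    rw [integral_finset_sum _ fun k _ => integrable_term α k]
    refine Finset.sum_congr rfl fun k _ => ?_
    rw [integral_const_mul]
    congr 1
    exact integral_ofReal
  have hodd : ∀ n : ℕ, (Complex.I * α) ^ (2 * n + 1) / (2 * n + 1)! *
      (gmom (3 * (2 * n + 1)) : ℂ) = 0 := by
    intro n
    have : 3 * (2 * n + 1) = 2 * (3 * n + 1) + 1 := by ring
    rw [this, gmom_odd]
    simp
  have hsum : (∑ k ∈ Finset.range (2 * m + 2), (Complex.I * α) ^ k / k ! * (gmom (3 * k) : ℂ))
      = ∑ n ∈ Finset.range (m + 1),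
          (Complex.I * α) ^ (2 * n) / (2 * n)! * (gmom (3 * (2 * n)) : ℂ) :=
    sum_pair _ m hodd
  rw [cubicI, hint, hsum, mul_add]
  have hterm : ∀ n : ℕ,
      ((1 / Real.sqrt (2 * π) : ℝ) : ℂ) *
          ((Complex.I * α) ^ (2 * n) / (2 * n)! * (gmom (3 * (2 * n)) : ℂ))
        = ((-1 : ℂ) ^ n / 8 ^ n) * ((6 * n)! / ((2 * n)! * (3 * n)!)) * (α : ℂ) ^ (2 * n) := by
    intro n
    have h1 : 3 * (2 * n) = 2 * (3 * n) := by ring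
    rw [h1, gmom_even]
    have h2 : 2 * (3 * n) = 6 * n := by ring
    rw [h2]
    have h3 : (Complex.I * α) ^ (2 * n) = (-1 : ℂ) ^ n * (α : ℂ) ^ (2 * n) := by
      rw [pow_mul, pow_mul]
      congr 1
      funext
      rw [mul_pow, Complex.I_sq]
      ring_nf
    rw [h3]
    have hs' : Real.sqrt (2 * π) ≠ 0 := ne_of_gt sqrt_two_pi_pos
    have hf1 : ((2 * n)! : ℝ) ≠ 0 := by exact_mod_cast Nat.factorial_ne_zero (2 * n)
    have hf2 : ((3 * n)! : ℝ) ≠ 0 := by exact_mod_cast Nat.factorial_ne_zero (3 * n)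
    have h2n : ((2 : ℝ)) ^ (3 * n) ≠ 0 := by positivity
    have hreal : (1 / Real.sqrt (2 * π)) *
        ((((6 * n)! / (2 ^ (3 * n) * (3 * n)!) * Real.sqrt (2 * π))) / (2 * n)!)
        = (1 / (8 : ℝ) ^ n) * ((6 * n)! / ((2 * n)! * (3 * n)!)) := by
      rw [show (8 : ℝ) = 2 ^ 3 from by norm_num, ← pow_mul]
      field_simp
      try simp
      try tauto
    calc ((1 / Real.sqrt (2 * π) : ℝ) : ℂ) *
          ((-1 : ℂ) ^ n * (α : ℂ) ^ (2 * n) / ((2 * n)! : ℂ) *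
            ((((6 * n)! / (2 ^ (3 * n) * (3 * n)!) * Real.sqrt (2 * π)) : ℝ) : ℂ))
        = (-1 : ℂ) ^ n * (α : ℂ) ^ (2 * n) *
            (((1 / Real.sqrt (2 * π)) *
              ((((6 * n)! / (2 ^ (3 * n) * (3 * n)!) * Real.sqrt (2 * π))) / (2 * n)!) : ℝ) : ℂ) := by
          push_cast
          ring
      _ = ((-1 : ℂ) ^ n / 8 ^ n) * ((6 * n)! / ((2 * n)! * (3 * n)!)) * (α : ℂ) ^ (2 * n) := by
          rw [hreal]
          push_cast
          ring
  rw [Finset.mul_sum]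
  rw [Finset.sum_congr rfl fun n _ => hterm n]
  ring

/-- The asymptotic (perturbative) expansion of the cubic-model integral at `α = 0`:
`I(α) = ∑_{n=0}^{m} ((-1)ⁿ/8ⁿ) ((6n)!/((2n)!(3n)!)) α^{2n} + O(α^{2m+2})`. -/
theorem cubicI_asymptotic_expansion (m : ℕ) :
    (fun α : ℝ => cubicI α -
        ∑ n ∈ Finset.range (m + 1),
          ((-1 : ℂ) ^ n / 8 ^ n) * ((6 * n)! / ((2 * n)! * (3 * n)!)) * (α : ℂ) ^ (2 * n))
      =O[nhdsWithin (0 : ℝ) {0}ᶜ] fun α : ℝ => α ^ (2 * m + 2) := by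
  rw [Asymptotics.isBigO_iff]
  refine ⟨(1 / Real.sqrt (2 * π)) *
    ((∫ x : ℝ, |x ^ (3 * (2 * m + 2)) * Real.exp (-x ^ 2 / 2)|) / (2 * m + 2)!), ?_⟩
  refine Eventually.of_forall fun α => ?_
  rw [cubicI_eq m α]
  have h1 : ‖((1 / Real.sqrt (2 * π) : ℝ) : ℂ) *
      ∫ x : ℝ, ((Real.exp (-x ^ 2 / 2) : ℝ) : ℂ) * taylorRem (2 * m + 2) (α * x ^ 3)‖
      = (1 / Real.sqrt (2 * π)) *
        ‖∫ x : ℝ, ((Real.exp (-x ^ 2 / 2) : ℝ) : ℂ) * taylorRem (2 * m + 2) (α * x ^ 3)‖ := by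
    rw [norm_mul, Complex.norm_real, Real.norm_of_nonneg (by positivity)]
  rw [h1]
  have h2 : ‖∫ x : ℝ, ((Real.exp (-x ^ 2 / 2) : ℝ) : ℂ) * taylorRem (2 * m + 2) (α * x ^ 3)‖
      ≤ ∫ x : ℝ, |α| ^ (2 * m + 2) / (2 * m + 2)! *
          |x ^ (3 * (2 * m + 2)) * Real.exp (-x ^ 2 / 2)| := by
    refine norm_integral_le_of_norm_le ((integrable_gmom (3 * (2 * m + 2))).abs.const_mul _)
      (Eventually.of_forall fun x => rem_bound (2 * m + 2) α x)
  have h3 : (∫ x : ℝ, |α| ^ (2 * m + 2) / (2 * m + 2)! *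
      |x ^ (3 * (2 * m + 2)) * Real.exp (-x ^ 2 / 2)|)
      = |α| ^ (2 * m + 2) / (2 * m + 2)! *
        ∫ x : ℝ, |x ^ (3 * (2 * m + 2)) * Real.exp (-x ^ 2 / 2)| := integral_const_mul _ _
  have hnorm : ‖α ^ (2 * m + 2)‖ = |α| ^ (2 * m + 2) := by
    rw [Real.norm_eq_abs, abs_pow]
  rw [hnorm]
  calc (1 / Real.sqrt (2 * π)) *
        ‖∫ x : ℝ, ((Real.exp (-x ^ 2 / 2) : ℝ) : ℂ) * taylorRem (2 * m + 2) (α * x ^ 3)‖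
      ≤ (1 / Real.sqrt (2 * π)) * (|α| ^ (2 * m + 2) / (2 * m + 2)! *
          ∫ x : ℝ, |x ^ (3 * (2 * m + 2)) * Real.exp (-x ^ 2 / 2)|) := by
        rw [← h3]
        exact mul_le_mul_of_nonneg_left h2 (by positivity)
    _ = (1 / Real.sqrt (2 * π)) *
          ((∫ x : ℝ, |x ^ (3 * (2 * m + 2)) * Real.exp (-x ^ 2 / 2)|) / (2 * m + 2)!) *
          |α| ^ (2 * m + 2) := by ring
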